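/- Let M = (x, p) be an n-agent mechanism on finite type sets T_1, …, T_n with independent full-support type distributions f_1, …, f_n, finite outcome set O, and valuations v_1, …, v_n. For every ε ≥ 0, if M is ε-BIC and interim IR, then there exists an n-agent mechanism M' = (x', p') on the same data that is BIC and interim IR, satisfies W(M') ≥ W(M) and R(M') ≥ R(M) − (∑_{i=1}^n |T_i|)·ε, and is (ex ante) allocation-invariant: E_{t∼f}[x'(t)] = E_{t∼f}[x(t)] as distributions over O. -/

import Mathlib

set_option maxHeartbeats 1000000
set_option linter.unusedSectionVars false

open Finset

section Core

variable {S : Type*} [Fintype S] [Nonempty S] [DecidableEq S]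

/-- indirect utility -/
noncomputable def lamF (u : S → S → ℝ) (π : S → ℝ) (s : S) : ℝ :=
  Finset.univ.sup' Finset.univ_nonempty (fun t => u s t - π t)

noncomputable def PhiF (f : S → ℝ) (u : S → S → ℝ) (π : S → ℝ) : ℝ :=
  ∑ s, f s * lamF u π s + ∑ t, f t * π t

lemma lamF_ge (u : S → S → ℝ) (π : S → ℝ) (s t : S) : u s t - π t ≤ lamF u π s :=
  Finset.le_sup' (fun t => u s t - π t) (mem_univ t)

lemma lamF_exists (u : S → S → ℝ) (π : S → ℝ) (s : S) :
    ∃ t, lamF u π s = u s t - π t := by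
  obtain ⟨t, _, ht⟩ := Finset.exists_mem_eq_sup' (Finset.univ_nonempty) (fun t => u s t - π t)
  exact ⟨t, ht⟩

lemma lamF_le (u : S → S → ℝ) (π : S → ℝ) (s : S) {c : ℝ}
    (h : ∀ t, u s t - π t ≤ c) : lamF u π s ≤ c :=
  Finset.sup'_le _ _ fun t _ => h t

lemma lamF_continuous (u : S → S → ℝ) (s : S) :
    Continuous (fun π : S → ℝ => lamF u π s) := by
  apply Continuous.finset_sup'_apply Finset.univ_nonempty
  intro t _
  exact continuous_const.sub (continuous_apply t)

lemma PhiF_continuous (f : S → ℝ) (u : S → S → ℝ) :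
    Continuous (fun π : S → ℝ => PhiF f u π) := by
  apply Continuous.add
  · exact continuous_finset_sum _ fun s _ =>
      continuous_const.mul (lamF_continuous u s)
  · exact continuous_finset_sum _ fun t _ =>
      continuous_const.mul (continuous_apply t)

lemma lamF_shift (u : S → S → ℝ) (π : S → ℝ) (c : ℝ) (s : S) :
    lamF u (fun t => π t + c) s = lamF u π s - c := by
  apply le_antisymm
  · apply lamF_le
    intro t
    have := lamF_ge u π s t
    ring_nf
    linarith
  · obtain ⟨t, ht⟩ := lamF_exists u π s
    have := lamF_ge u (fun t => π t + c) s t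
    linarith

lemma PhiF_shift (f : S → ℝ) (hf1 : ∑ s, f s = 1) (u : S → S → ℝ) (π : S → ℝ) (c : ℝ) :
    PhiF f u (fun t => π t + c) = PhiF f u π := by
  unfold PhiF
  simp only [lamF_shift, mul_sub, mul_add, Finset.sum_sub_distrib, Finset.sum_add_distrib,
    ← Finset.sum_mul, hf1]
  ring

end Core

section Core2
variable {S : Type*} [Fintype S] [Nonempty S] [DecidableEq S]

lemma exists_phi_min (f : S → ℝ) (hf : ∀ s, 0 < f s) (hf1 : ∑ s, f s = 1) (u : S → S → ℝ) :
    ∃ pihat : S → ℝ, ∀ π, PhiF f u pihat ≤ PhiF f u π := by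
  classical
  set tbar : S := Classical.arbitrary S with htbar
  set c0 : ℝ := PhiF f u 0 with hc0
  set L : ℝ := univ.inf' univ_nonempty (fun s => univ.inf' univ_nonempty (fun t => u s t)) with hL
  have hLle : ∀ s t, L ≤ u s t := by
    intro s t
    calc L ≤ univ.inf' univ_nonempty (fun t => u s t) := Finset.inf'_le _ (mem_univ s)
    _ ≤ u s t := Finset.inf'_le _ (mem_univ t)
  set A : Set (S → ℝ) := {π | π tbar = 0 ∧ PhiF f u π ≤ c0} with hA
  -- general facts
  have hlam_ge_LM : ∀ (π : S → ℝ) (s : S),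
      L + univ.sup' univ_nonempty (fun t => -π t) ≤ lamF u π s := by
    intro π s
    obtain ⟨t, _, ht⟩ := Finset.exists_mem_eq_sup' univ_nonempty (fun t => -π t)
    have := lamF_ge u π s t
    have := hLle s t
    rw [ht]; linarith
  have hsumlam : ∀ (π : S → ℝ),
      L + univ.sup' univ_nonempty (fun t => -π t) ≤ ∑ s, f s * lamF u π s := by
    intro π
    have : ∑ s, f s * (L + univ.sup' univ_nonempty (fun t => -π t)) ≤
        ∑ s, f s * lamF u π s := by
      apply Finset.sum_le_sum
      intro s _
      exact mul_le_mul_of_nonneg_left (hlam_ge_LM π s) (hf s).le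
    rwa [← Finset.sum_mul, hf1, one_mul] at this
  -- bound for members of A
  have hMnn : ∀ π ∈ A, 0 ≤ univ.sup' univ_nonempty (fun t => -π t) := by
    intro π hπ
    have : -π tbar ≤ univ.sup' univ_nonempty (fun t => -π t) :=
      Finset.le_sup' (fun t => -π t) (mem_univ tbar)
    rw [hπ.1] at this; simpa using this
  have hbound : ∀ π ∈ A, ∀ t, |π t| ≤ (c0 - L) / univ.inf' univ_nonempty f := by
    intro π hπ t
    set M : ℝ := univ.sup' univ_nonempty (fun t => -π t) with hM
    have hM0 : 0 ≤ M := hMnn π hπ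
    have hfm : 0 < univ.inf' univ_nonempty f := by
      obtain ⟨s, _, hs⟩ := Finset.exists_mem_eq_inf' univ_nonempty f
      rw [hs]; exact hf s
    have hfmle : ∀ s, univ.inf' univ_nonempty f ≤ f s := fun s => Finset.inf'_le _ (mem_univ s)
    have herase : ∀ t0 : S, ∀ c : ℝ, c ≤ 0 → (∑ s ∈ univ.erase t0, f s) * c ≥ c := by
      intro t0 c hc
      have h1 : ∑ s ∈ univ.erase t0, f s ≤ 1 := by
        have := Finset.sum_le_sum_of_subset_of_nonneg (Finset.erase_subset t0 univ)
          (fun s _ _ => (hf s).le)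
        rwa [hf1] at this
      have h0 : 0 ≤ ∑ s ∈ univ.erase t0, f s :=
        Finset.sum_nonneg fun s _ => (hf s).le
      nlinarith
    have hsumpi : ∀ t0 : S, f t0 * π t0 - M ≤ ∑ s, f s * π s := by
      intro t0
      rw [← Finset.add_sum_erase _ _ (mem_univ t0)]
      have : ∀ s ∈ univ.erase t0, f s * (-M) ≤ f s * π s := by
        intro s _
        apply mul_le_mul_of_nonneg_left _ (hf s).le
        have : -π s ≤ M := Finset.le_sup' (fun t => -π t) (mem_univ s)
        linarith
      have h2 : (∑ s ∈ univ.erase t0, f s) * (-M) ≤ ∑ s ∈ univ.erase t0, f s * π s := by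
        rw [Finset.sum_mul] at *
        exact Finset.sum_le_sum this
      have h3 := herase t0 (-M) (by linarith)
      linarith
    have hPhile : PhiF f u π ≤ c0 := hπ.2
    -- upper bound on π t
    have hup : f t * π t ≤ c0 - L := by
      have h1 := hsumlam π
      have h2 := hsumpi t
      have : PhiF f u π = ∑ s, f s * lamF u π s + ∑ s, f s * π s := rfl
      linarith
    -- upper bound on M
    have hMle : f tbar * M ≤ c0 - L := by
      have h1 := hsumlam π
      have h3 : ∑ s ∈ univ.erase tbar, f s = 1 - f tbar := by
        rw [← hf1, ← Finset.add_sum_erase _ _ (mem_univ tbar)]; ring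
      have h2 : (1 - f tbar) * (-M) ≤ ∑ s, f s * π s := by
        rw [← Finset.add_sum_erase _ _ (mem_univ tbar), hπ.1, mul_zero, zero_add, ← h3,
          Finset.sum_mul]
        apply Finset.sum_le_sum
        intro s _
        apply mul_le_mul_of_nonneg_left _ (hf s).le
        have : -π s ≤ M := Finset.le_sup' (fun t => -π t) (mem_univ s)
        linarith
      have hPhi : PhiF f u π = ∑ s, f s * lamF u π s + ∑ s, f s * π s := rfl
      nlinarith
    have hc0L : (0:ℝ) ≤ c0 - L := by
      have h1 := hsumlam (0 : S → ℝ)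
      have h2 : univ.sup' univ_nonempty (fun t => -(0:S→ℝ) t) = 0 := by
        simp
      have h3 : ∑ s, f s * (0:S→ℝ) s = 0 := by simp
      have : PhiF f u 0 = ∑ s, f s * lamF u (0:S→ℝ) s + ∑ s, f s * (0:S→ℝ) s := rfl
      rw [h2] at h1
      linarith
    rw [abs_le]
    constructor
    · -- -R ≤ π t, i.e. -π t ≤ R; -π t ≤ M ≤ (c0-L)/f tbar ≤ (c0-L)/fm
      have h1 : -π t ≤ M := Finset.le_sup' (fun t => -π t) (mem_univ t)
      have h2 : M ≤ (c0 - L) / univ.inf' univ_nonempty f := by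
        rw [le_div_iff₀ hfm]
        calc M * univ.inf' univ_nonempty f ≤ M * f tbar := by
              apply mul_le_mul_of_nonneg_left (hfmle tbar) hM0
        _ ≤ c0 - L := by linarith [hMle]
      linarith
    · rcases le_or_gt (π t) 0 with h | h
      · exact le_trans h (div_nonneg hc0L hfm.le)
      · rw [le_div_iff₀ hfm]
        calc π t * univ.inf' univ_nonempty f ≤ π t * f t := by
              apply mul_le_mul_of_nonneg_left (hfmle t) h.le
        _ ≤ c0 - L := by rw [mul_comm]; exact hup
  -- compactness
  have hclosed : IsClosed A := by
    apply IsClosed.inter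
    · exact isClosed_eq (continuous_apply tbar) continuous_const
    · exact isClosed_le (PhiF_continuous f u) continuous_const
  have hsub : A ⊆ Metric.closedBall 0 ((c0 - L) / univ.inf' univ_nonempty f) := by
    intro π hπ
    rw [Metric.mem_closedBall, dist_zero_right]
    have h0R : (0:ℝ) ≤ (c0 - L) / univ.inf' univ_nonempty f := by
      have := hbound π hπ (Classical.arbitrary S)
      exact le_trans (abs_nonneg _) this
    rw [pi_norm_le_iff_of_nonneg h0R]
    intro t
    rw [Real.norm_eq_abs]
    exact hbound π hπ t
  have hcomp : IsCompact A :=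
    (isCompact_closedBall 0 _).of_isClosed_subset hclosed hsub
  have h0A : (0 : S → ℝ) ∈ A := ⟨rfl, le_refl _⟩
  obtain ⟨pihat, hpihatA, hmin⟩ := hcomp.exists_isMinOn ⟨0, h0A⟩ (PhiF_continuous f u).continuousOn
  refine ⟨pihat, ?_⟩
  intro π
  have hshift : PhiF f u (fun t => π t + (-(π tbar))) = PhiF f u π := PhiF_shift f hf1 u π _
  rcases le_or_gt (PhiF f u π) c0 with h | h
  · have : (fun t => π t + (-(π tbar))) ∈ A := by
      constructor
      · simp
      · rw [hshift]; exact h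
    calc PhiF f u pihat ≤ PhiF f u (fun t => π t + (-(π tbar))) := hmin this
    _ = PhiF f u π := hshift
  · calc PhiF f u pihat ≤ PhiF f u 0 := hmin h0A
    _ ≤ PhiF f u π := h.le
end Core2

section Core3
variable {S : Type*} [Fintype S] [Nonempty S] [DecidableEq S]

lemma exists_argmax_kernel (f : S → ℝ) (hf : ∀ s, 0 < f s) (hf1 : ∑ s, f s = 1)
    (u : S → S → ℝ) (pihat : S → ℝ) (hmin : ∀ π, PhiF f u pihat ≤ PhiF f u π) :
    ∃ q : S → S → ℝ, (∀ s t, 0 ≤ q s t) ∧ (∀ s, ∑ t, q s t = 1) ∧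
      (∀ t, ∑ s, f s * q s t = f t) ∧
      (∀ s t, q s t ≠ 0 → u s t - pihat t = lamF u pihat s) := by
  classical
  set Arg : S → Finset S :=
    fun s => univ.filter (fun t => u s t - pihat t = lamF u pihat s) with hArg
  have hArgne : ∀ s, (Arg s).Nonempty := by
    intro s
    obtain ⟨t, ht⟩ := lamF_exists u pihat s
    exact ⟨t, by simp [hArg, ht.symm]⟩
  set Q : Set (S → S → ℝ) :=
    {q | (∀ s t, 0 ≤ q s t) ∧ (∀ s, ∑ t, q s t = 1) ∧ ∀ s t, t ∉ Arg s → q s t = 0}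
    with hQ
  set Lmap : (S → S → ℝ) → (S → ℝ) := fun q t => ∑ s, f s * q s t with hLmap
  set C : Set (S → ℝ) := Lmap '' Q with hC
  -- it suffices that f ∈ C
  suffices hfC : f ∈ C by
    obtain ⟨q, hqQ, hqf⟩ := hfC
    refine ⟨q, hqQ.1, hqQ.2.1, ?_, ?_⟩
    · intro t
      have := congrFun hqf t
      simpa [hLmap] using this
    · intro s t hqst
      by_contra hne
      exact hqst (hqQ.2.2 s t (by simp [hArg, hne]))
  by_contra hfC
  -- convexity of C
  have hQconv : Convex ℝ Q := by
    intro q1 hq1 q2 hq2 a b ha hb hab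
    constructor
    · intro s t
      have := hq1.1 s t; have := hq2.1 s t
      simp only [Pi.add_apply, Pi.smul_apply, smul_eq_mul]
      nlinarith
    constructor
    · intro s
      simp only [Pi.add_apply, Pi.smul_apply, smul_eq_mul]
      rw [Finset.sum_add_distrib, ← Finset.mul_sum, ← Finset.mul_sum, hq1.2.1 s, hq2.2.1 s]
      simpa using hab
    · intro s t ht
      simp only [Pi.add_apply, Pi.smul_apply, smul_eq_mul, hq1.2.2 s t ht, hq2.2.2 s t ht]
      ring
  have hLadd : ∀ (a b : ℝ) (q1 q2 : S → S → ℝ),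
      Lmap (a • q1 + b • q2) = a • Lmap q1 + b • Lmap q2 := by
    intro a b q1 q2
    funext t
    simp only [hLmap, Pi.add_apply, Pi.smul_apply, smul_eq_mul]
    rw [Finset.mul_sum, Finset.mul_sum, ← Finset.sum_add_distrib]
    apply Finset.sum_congr rfl; intros; ring
  have hCconv : Convex ℝ C := by
    intro x hx y hy a b ha hb hab
    obtain ⟨q1, hq1, rfl⟩ := hx
    obtain ⟨q2, hq2, rfl⟩ := hy
    exact ⟨a • q1 + b • q2, hQconv hq1 hq2 ha hb hab, hLadd a b q1 q2⟩
  -- compactness of C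
  have hQsub : Q ⊆ Metric.closedBall 0 1 := by
    intro q hq
    rw [Metric.mem_closedBall, dist_zero_right]
    rw [pi_norm_le_iff_of_nonneg zero_le_one]
    intro s
    rw [pi_norm_le_iff_of_nonneg zero_le_one]
    intro t
    rw [Real.norm_eq_abs, abs_le]
    constructor
    · linarith [hq.1 s t]
    · calc q s t ≤ ∑ t', q s t' :=
            Finset.single_le_sum (fun t' _ => hq.1 s t') (mem_univ t)
      _ = 1 := hq.2.1 s
  have hQclosed : IsClosed Q := by
    rw [hQ, Set.setOf_and, Set.setOf_and]
    refine IsClosed.inter ?_ (IsClosed.inter ?_ ?_)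
    · rw [Set.setOf_forall]
      refine isClosed_iInter fun s => ?_
      rw [Set.setOf_forall]
      exact isClosed_iInter fun t =>
        isClosed_le continuous_const ((continuous_apply t).comp (continuous_apply s))
    · rw [Set.setOf_forall]
      exact isClosed_iInter fun s => isClosed_eq
        (continuous_finset_sum _ fun t _ => (continuous_apply t).comp (continuous_apply s))
        continuous_const
    · rw [Set.setOf_forall]
      refine isClosed_iInter fun s => ?_
      rw [Set.setOf_forall]
      refine isClosed_iInter fun t => ?_
      by_cases h : t ∈ Arg s
      · simp only [h, not_true_eq_false, false_implies, Set.setOf_true]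
        exact isClosed_univ
      · simp only [h, not_false_eq_true, true_implies]
        exact isClosed_eq ((continuous_apply t).comp (continuous_apply s)) continuous_const
  have hQcomp : IsCompact Q :=
    (isCompact_closedBall 0 1).of_isClosed_subset hQclosed hQsub
  have hLcont : Continuous Lmap := by
    apply continuous_pi
    intro t
    exact continuous_finset_sum _ fun s _ =>
      continuous_const.mul ((continuous_apply t).comp (continuous_apply s))
  have hCcomp : IsCompact C := hQcomp.image hLcont
  -- separation
  obtain ⟨g, u0, hgC, hgf⟩ :=
    geometric_hahn_banach_closed_point hCconv hCcomp.isClosed hfC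
  set d : S → ℝ := fun t => g (fun j => if t = j then (1:ℝ) else 0) with hd
  have hgrep : ∀ π : S → ℝ, g π = ∑ t, π t * d t := by
    intro π
    conv_lhs => rw [pi_eq_sum_univ π, map_sum]
    congr 1; funext t
    rw [map_smul]; simp [hd]
  -- argmax of d over Arg s
  have hsel2 : ∀ s, ∃ b ∈ Arg s, ∀ b' ∈ Arg s, d b' ≤ d b := by
    intro s
    exact Finset.exists_max_image (Arg s) d (hArgne s)
  choose sel2 hsel2mem hsel2max using hsel2
  -- the corresponding vertex of Q
  set qstar : S → S → ℝ := fun s t => if t = sel2 s then 1 else 0 with hqstar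
  have hqstarQ : qstar ∈ Q := by
    refine ⟨?_, ?_, ?_⟩
    · intro s t; simp only [hqstar]; split <;> norm_num
    · intro s; simp [hqstar]
    · intro s t ht
      simp only [hqstar]
      split
      · rename_i heq; exfalso; rw [heq] at ht; exact ht (hsel2mem s)
      · rfl
  have hkey : ∑ s, f s * d (sel2 s) < ∑ t, f t * d t := by
    have h1 : Lmap qstar ∈ C := ⟨qstar, hqstarQ, rfl⟩
    have h2 := hgC _ h1
    have h3 : g (Lmap qstar) = ∑ s, f s * d (sel2 s) := by
      rw [hgrep]
      have hh : ∀ t, Lmap qstar t * d t = ∑ s, f s * qstar s t * d t := by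
        intro t; rw [hLmap]; dsimp only; rw [Finset.sum_mul]
      rw [Finset.sum_congr rfl fun t _ => hh t, Finset.sum_comm]
      apply Finset.sum_congr rfl
      intro s _
      rw [hqstar]
      simp
    have h4 : g f = ∑ t, f t * d t := hgrep f
    linarith
  -- perturbation contradiction
  set B : ℝ := 1 + ∑ t, |d t| with hB
  have hdB : ∀ t, |d t| ≤ B - 1 := by
    intro t
    have h := Finset.single_le_sum (fun t' (_ : t' ∈ univ) => abs_nonneg (d t')) (mem_univ t)
    rw [hB]; linarith
  have hBpos : 0 < B := by
    have : 0 ≤ ∑ t, |d t| := Finset.sum_nonneg fun t _ => abs_nonneg _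
    rw [hB]; linarith
  set gap : S → ℝ := fun s =>
    if h : (univ.filter (fun t => t ∉ Arg s)).Nonempty
    then (univ.filter (fun t => t ∉ Arg s)).inf' h (fun t => lamF u pihat s - (u s t - pihat t))
    else 1 with hgap
  have hgappos : ∀ s, 0 < gap s := by
    intro s
    rw [hgap]
    dsimp only
    split
    · rename_i h
      obtain ⟨t, htmem, hteq⟩ :=
        Finset.exists_mem_eq_inf' h (fun t => lamF u pihat s - (u s t - pihat t))
      rw [hteq]
      have ht' : t ∉ Arg s := (Finset.mem_filter.mp htmem).2
      have hlt : u s t - pihat t ≠ lamF u pihat s := by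
        intro hc; exact ht' (by simp [hArg, hc])
      rcases lt_or_eq_of_le (lamF_ge u pihat s t) with h' | h'
      · linarith
      · exact absurd h' hlt
    · norm_num
  have hgaple : ∀ s t, t ∉ Arg s → gap s ≤ lamF u pihat s - (u s t - pihat t) := by
    intro s t ht
    have hmem : t ∈ univ.filter (fun t => t ∉ Arg s) := by simp [ht]
    rw [hgap]
    dsimp only
    rw [dif_pos ⟨t, hmem⟩]
    exact Finset.inf'_le _ hmem
  set gam : ℝ := univ.inf' univ_nonempty gap with hgam
  have hgampos : 0 < gam := by
    obtain ⟨s, _, hs⟩ := Finset.exists_mem_eq_inf' univ_nonempty gap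
    rw [hgam, hs]; exact hgappos s
  have hgamle : ∀ s, gam ≤ gap s := fun s => Finset.inf'_le _ (mem_univ s)
  set dl : ℝ := gam / (2 * B) with hdl
  have hdlpos : 0 < dl := div_pos hgampos (by linarith)
  have hdl2B : dl * (2 * B) = gam := by
    rw [hdl]; field_simp
  set pi' : S → ℝ := fun t => pihat t - dl * d t with hpi'
  have hlam' : ∀ s, lamF u pi' s = lamF u pihat s + dl * d (sel2 s) := by
    intro s
    apply le_antisymm
    · apply lamF_le
      intro t
      have hval : u s t - pi' t = (u s t - pihat t) + dl * d t := by
        simp only [hpi']; ring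
      by_cases ht : t ∈ Arg s
      · have heq : u s t - pihat t = lamF u pihat s :=
          (Finset.mem_filter.mp ht).2
        have hdle : d t ≤ d (sel2 s) := hsel2max s t ht
        have := mul_le_mul_of_nonneg_left hdle hdlpos.le
        rw [hval, heq]
        linarith
      · have hle := hgaple s t ht
        have h2 : dl * d t - dl * d (sel2 s) < gap s := by
          have hd1 : d t ≤ B - 1 := le_trans (le_abs_self _) (hdB t)
          have hd2 : -(B - 1) ≤ d (sel2 s) := by
            have := hdB (sel2 s); rw [abs_le] at this; linarith [this.1]
          have hc : dl * d t - dl * d (sel2 s) ≤ dl * (2 * B - 2) := by nlinarith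
          nlinarith [hgamle s]
        rw [hval]
        linarith
    · have hmem := hsel2mem s
      have heq : u s (sel2 s) - pihat (sel2 s) = lamF u pihat s :=
        (Finset.mem_filter.mp hmem).2
      have hge := lamF_ge u pi' s (sel2 s)
      have h1 : u s (sel2 s) - pi' (sel2 s)
          = (u s (sel2 s) - pihat (sel2 s)) + dl * d (sel2 s) := by
        simp only [hpi']; ring
      rw [h1, heq] at hge
      linarith
  have hPhi' : PhiF f u pi'
      = PhiF f u pihat + dl * (∑ s, f s * d (sel2 s) - ∑ t, f t * d t) := by
    unfold PhiF
    have e1 : ∑ s, f s * lamF u pi' s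
        = ∑ s, f s * lamF u pihat s + dl * ∑ s, f s * d (sel2 s) := by
      rw [Finset.mul_sum, ← Finset.sum_add_distrib]
      apply Finset.sum_congr rfl
      intro s _
      rw [hlam' s]; ring
    have e2 : ∑ t, f t * pi' t = ∑ t, f t * pihat t - dl * ∑ t, f t * d t := by
      rw [Finset.mul_sum, ← Finset.sum_sub_distrib]
      apply Finset.sum_congr rfl
      intro t _
      simp only [hpi']; ring
    rw [e1, e2]; ring
  have hcontra := hmin pi'
  rw [hPhi'] at hcontra
  have hneg : ∑ s, f s * d (sel2 s) - ∑ t, f t * d t < 0 := by linarith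
  have := mul_neg_of_pos_of_neg hdlpos hneg
  linarith

end Core3

section Core4
variable {S : Type*} [Fintype S] [Nonempty S] [DecidableEq S]

lemma exists_pistar (f : S → ℝ) (hf : ∀ s, 0 < f s) (hf1 : ∑ s, f s = 1)
    (u : S → S → ℝ) (ε : ℝ) (hε : 0 ≤ ε)
    (hBIC : ∀ s t, u s t ≤ u s s + ε)
    (OPT : ℝ)
    (hOPT : ∀ π, OPT ≤ PhiF f u π)
    (hne : ∃ π0 : S → ℝ, PhiF f u π0 = OPT) :
    ∃ πs : S → ℝ, (∀ t, 0 ≤ πs t) ∧ (∀ t, πs t ≤ ((Fintype.card S : ℝ) - 1) * ε) ∧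
      PhiF f u πs = OPT := by
  classical
  set L : ℝ := univ.inf' univ_nonempty (fun s => univ.inf' univ_nonempty (fun t => u s t)) with hL
  have hLle : ∀ s t, L ≤ u s t := by
    intro s t
    calc L ≤ univ.inf' univ_nonempty (fun t => u s t) := Finset.inf'_le _ (mem_univ s)
    _ ≤ u s t := Finset.inf'_le _ (mem_univ t)
  set P0 : Set (S → ℝ) :=
    {π | PhiF f u π = OPT ∧ (∀ t, 0 ≤ π t) ∧ ∃ t, π t = 0} with hP0
  -- nonempty
  obtain ⟨π0, hπ0⟩ := hne
  have hP0ne : P0.Nonempty := by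
    obtain ⟨t0, _, ht0⟩ := Finset.exists_mem_eq_inf' univ_nonempty π0
    refine ⟨fun t => π0 t + (-(univ.inf' univ_nonempty π0)), ?_, ?_, ⟨t0, ?_⟩⟩
    · rw [PhiF_shift f hf1 u π0 _, hπ0]
    · intro t
      have : univ.inf' univ_nonempty π0 ≤ π0 t := Finset.inf'_le _ (mem_univ t)
      show 0 ≤ π0 t + -(univ.inf' univ_nonempty π0)
      linarith
    · show π0 t0 + -(univ.inf' univ_nonempty π0) = 0
      rw [← ht0]; ring
  -- closed and bounded
  have hclosed : IsClosed P0 := by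
    rw [hP0, Set.setOf_and]
    refine IsClosed.inter (isClosed_eq (PhiF_continuous f u) continuous_const) ?_
    rw [Set.setOf_and]
    refine IsClosed.inter ?_ ?_
    · rw [Set.setOf_forall]
      exact isClosed_iInter fun t => isClosed_le continuous_const (continuous_apply t)
    · rw [show {π : S → ℝ | ∃ t, π t = 0} = ⋃ t, {π | π t = 0} by
        ext π; simp]
      exact isClosed_iUnion_of_finite fun t =>
        isClosed_eq (continuous_apply t) continuous_const
  have hfm : 0 < univ.inf' univ_nonempty f := by
    obtain ⟨s, _, hs⟩ := Finset.exists_mem_eq_inf' univ_nonempty f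
    rw [hs]; exact hf s
  have hfmle : ∀ s, univ.inf' univ_nonempty f ≤ f s := fun s => Finset.inf'_le _ (mem_univ s)
  have hbound : ∀ π ∈ P0, ∀ t, |π t| ≤ (OPT - L) / univ.inf' univ_nonempty f := by
    intro π hπ t
    obtain ⟨hΦ, hnn, t0, ht0⟩ := hπ
    have hlamge : ∀ s, L ≤ lamF u π s := by
      intro s
      have := lamF_ge u π s t0
      rw [ht0] at this
      have := hLle s t0
      linarith
    have hsum1 : L ≤ ∑ s, f s * lamF u π s := by
      have : ∑ s, f s * L ≤ ∑ s, f s * lamF u π s :=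
        Finset.sum_le_sum fun s _ => mul_le_mul_of_nonneg_left (hlamge s) (hf s).le
      rwa [← Finset.sum_mul, hf1, one_mul] at this
    have hsumπ : ∑ s, f s * π s ≤ OPT - L := by
      have : PhiF f u π = ∑ s, f s * lamF u π s + ∑ s, f s * π s := rfl
      rw [hΦ] at this
      linarith
    have hterm : f t * π t ≤ ∑ s, f s * π s :=
      Finset.single_le_sum (fun s _ => mul_nonneg (hf s).le (hnn s)) (mem_univ t)
    rw [abs_of_nonneg (hnn t)]
    rw [le_div_iff₀ hfm]
    calc π t * univ.inf' univ_nonempty f ≤ π t * f t :=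
          mul_le_mul_of_nonneg_left (hfmle t) (hnn t)
    _ = f t * π t := by ring
    _ ≤ OPT - L := le_trans hterm hsumπ
  have hsub : P0 ⊆ Metric.closedBall 0 ((OPT - L) / univ.inf' univ_nonempty f) := by
    intro π hπ
    rw [Metric.mem_closedBall, dist_zero_right]
    have h0R : (0:ℝ) ≤ (OPT - L) / univ.inf' univ_nonempty f :=
      le_trans (abs_nonneg _) (hbound π hπ (Classical.arbitrary S))
    rw [pi_norm_le_iff_of_nonneg h0R]
    intro t
    rw [Real.norm_eq_abs]
    exact hbound π hπ t
  have hcomp : IsCompact P0 :=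
    (isCompact_closedBall 0 _).of_isClosed_subset hclosed hsub
  -- minimize sum
  obtain ⟨πs, hπsP, hπsmin⟩ := hcomp.exists_isMinOn hP0ne
    (continuous_finset_sum univ fun t _ => continuous_apply t).continuousOn
  obtain ⟨hΦs, hnn, t0, ht0⟩ := hπsP
  -- key growth step
  have hkey : ∀ k : ℕ, (univ.filter (fun t => πs t ≤ (k:ℝ) * ε)) ≠ univ →
      ∃ b, ¬ (πs b ≤ (k:ℝ) * ε) ∧ πs b ≤ ((k:ℝ) + 1) * ε := by
    intro k hSk
    set Skf := univ.filter (fun t => πs t ≤ (k:ℝ) * ε) with hSkf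
    set Bf := univ.filter (fun t => ¬ (πs t ≤ (k:ℝ) * ε)) with hBf
    have hSkne : Skf.Nonempty := by
      refine ⟨t0, ?_⟩
      simp only [hSkf, mem_filter, mem_univ, true_and, ht0]
      positivity
    have hBne : Bf.Nonempty := by
      by_contra h
      apply hSk
      rw [Finset.eq_univ_iff_forall]
      intro t
      simp only [hSkf, mem_filter, mem_univ, true_and]
      by_contra hc
      exact h ⟨t, by simp only [hBf, mem_filter, mem_univ, true_and]; exact hc⟩
    by_cases hcase : ∃ a b, a ∈ Skf ∧ b ∈ Bf ∧ u a b - πs b = lamF u πs a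
    · obtain ⟨a, b, ha, hb, heq⟩ := hcase
      have ha' : πs a ≤ (k:ℝ) * ε := (Finset.mem_filter.mp ha).2
      have hb' : ¬ (πs b ≤ (k:ℝ) * ε) := (Finset.mem_filter.mp hb).2
      refine ⟨b, hb', ?_⟩
      have h1 : u a a - πs a ≤ lamF u πs a := lamF_ge u πs a a
      have h2 : u a b ≤ u a a + ε := hBIC a b
      have h3 : πs b = u a b - lamF u πs a := by linarith [heq]
      rw [h3]
      have : (k:ℝ)*ε + ε = ((k:ℝ)+1)*ε := by ring
      linarith
    · -- perturbation contradiction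
      exfalso
      push_neg at hcase
      set slackmin : ℝ :=
        Skf.inf' hSkne (fun a => Bf.inf' hBne (fun b => lamF u πs a - (u a b - πs b)))
        with hslackmin
      set pimin : ℝ := Bf.inf' hBne πs with hpimin
      have hslackpos : 0 < slackmin := by
        obtain ⟨a, ha, hae⟩ := Finset.exists_mem_eq_inf' hSkne
          (fun a => Bf.inf' hBne (fun b => lamF u πs a - (u a b - πs b)))
        obtain ⟨b, hb, hbe⟩ := Finset.exists_mem_eq_inf' hBne
          (fun b => lamF u πs a - (u a b - πs b))
        rw [hslackmin, hae, hbe]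
        have hne' := hcase a b ha hb
        have := lamF_ge u πs a b
        rcases lt_or_eq_of_le this with h | h
        · linarith
        · exact absurd h hne'
      have hpiminpos : 0 < pimin := by
        obtain ⟨b, hb, hbe⟩ := Finset.exists_mem_eq_inf' hBne πs
        rw [hpimin, hbe]
        have hb' : ¬ (πs b ≤ (k:ℝ) * ε) := (Finset.mem_filter.mp hb).2
        push_neg at hb'
        have : (0:ℝ) ≤ (k:ℝ)*ε := by positivity
        linarith
      set dl : ℝ := min slackmin pimin with hdl
      have hdlpos : 0 < dl := lt_min hslackpos hpiminpos
      set π' : S → ℝ := fun t => if πs t ≤ (k:ℝ)*ε then πs t else πs t - dl with hπ'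
      have hπ'le : ∀ t, π' t ≤ πs t := by
        intro t
        simp only [hπ']
        split
        · exact le_refl _
        · linarith
      have hslack_le : ∀ a b, a ∈ Skf → b ∈ Bf → slackmin ≤ lamF u πs a - (u a b - πs b) := by
        intro a b ha hb
        calc slackmin ≤ Bf.inf' hBne (fun b => lamF u πs a - (u a b - πs b)) :=
              Finset.inf'_le _ ha
        _ ≤ lamF u πs a - (u a b - πs b) := Finset.inf'_le _ hb
      have hpimin_le : ∀ b ∈ Bf, pimin ≤ πs b := fun b hb => Finset.inf'_le _ hb
      have hlam' : ∀ a, lamF u π' a ≤ lamF u πs a + (if πs a ≤ (k:ℝ)*ε then 0 else dl) := by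
        intro a
        apply lamF_le
        intro t
        by_cases hta : πs a ≤ (k:ℝ)*ε
        · rw [if_pos hta]
          by_cases htt : πs t ≤ (k:ℝ)*ε
          · have hpe : π' t = πs t := by simp only [hπ', if_pos htt]
            rw [hpe]
            have := lamF_ge u πs a t
            linarith
          · have hbt : t ∈ Bf := by
              simp only [hBf, mem_filter, mem_univ, true_and]; exact htt
            have hat : a ∈ Skf := by
              simp only [hSkf, mem_filter, mem_univ, true_and]; exact hta
            have h1 := hslack_le a t hat hbt
            have h2 : dl ≤ slackmin := min_le_left _ _
            have hpe : π' t = πs t - dl := by simp only [hπ', if_neg htt]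
            rw [hpe]
            linarith
        · rw [if_neg hta]
          have h3 : πs t - dl ≤ π' t := by
            simp only [hπ']
            split
            · linarith [hdlpos.le]
            · exact le_refl _
          have := lamF_ge u πs a t
          linarith
      have hπ'P : π' ∈ P0 := by
        have hle : PhiF f u π' ≤ OPT := by
          have e : PhiF f u π' ≤ ∑ a, f a * (lamF u πs a + (if πs a ≤ (k:ℝ)*ε then 0 else dl))
              + ∑ t, f t * (πs t - (if πs t ≤ (k:ℝ)*ε then 0 else dl)) := by
            apply add_le_add
            · exact Finset.sum_le_sum fun a _ =>
                mul_le_mul_of_nonneg_left (hlam' a) (hf a).le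
            · apply Finset.sum_le_sum
              intro t _
              apply mul_le_mul_of_nonneg_left _ (hf t).le
              simp only [hπ']
              split
              · simp
              · exact le_refl _
          have e2 : ∑ a, f a * (lamF u πs a + (if πs a ≤ (k:ℝ)*ε then 0 else dl))
              + ∑ t, f t * (πs t - (if πs t ≤ (k:ℝ)*ε then 0 else dl)) = PhiF f u πs := by
            unfold PhiF
            rw [← Finset.sum_add_distrib, ← Finset.sum_add_distrib]
            apply Finset.sum_congr rfl
            intro t _
            ring
          rw [e2, hΦs] at e
          exact e
        have hge := hOPT π'
        refine ⟨le_antisymm hle hge, ?_, ⟨t0, ?_⟩⟩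
        · intro t
          simp only [hπ']
          split
          · exact hnn t
          · rename_i h
            have hbt : t ∈ Bf := by
              simp only [hBf, mem_filter, mem_univ, true_and]; exact h
            have := hpimin_le t hbt
            have h2 : dl ≤ pimin := min_le_right _ _
            linarith
        · have hm : πs t0 ≤ (k:ℝ)*ε := by rw [ht0]; positivity
          simp only [hπ', if_pos hm]
          exact ht0
      have hlt : ∑ t, π' t < ∑ t, πs t := by
        obtain ⟨b, hb⟩ := hBne
        apply Finset.sum_lt_sum (fun t _ => hπ'le t)
        refine ⟨b, mem_univ b, ?_⟩
        have hb' : ¬ (πs b ≤ (k:ℝ)*ε) := (Finset.mem_filter.mp hb).2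
        simp only [hπ', if_neg hb']
        linarith
      have hmin' := (isMinOn_iff.mp hπsmin) π' hπ'P
      linarith
  -- growth induction
  have hgrow : ∀ k : ℕ, (univ.filter (fun t => πs t ≤ (k:ℝ) * ε)) = univ ∨
      (k + 1 ≤ (univ.filter (fun t => πs t ≤ (k:ℝ) * ε)).card) := by
    intro k
    induction k with
    | zero =>
      by_cases h : (univ.filter (fun t => πs t ≤ ((0:ℕ):ℝ) * ε)) = univ
      · left; exact h
      · right
        have hmem : t0 ∈ univ.filter (fun t => πs t ≤ ((0:ℕ):ℝ) * ε) := by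
          simp only [mem_filter, mem_univ, true_and, ht0]
          positivity
        exact Finset.card_pos.mpr ⟨t0, hmem⟩
    | succ k ih =>
      have hcast : (((k+1):ℕ):ℝ) = (k:ℝ) + 1 := by push_cast; ring
      have hmono : (univ.filter (fun t => πs t ≤ (k:ℝ) * ε)) ⊆
          (univ.filter (fun t => πs t ≤ (((k+1):ℕ):ℝ) * ε)) := by
        intro t ht
        simp only [mem_filter, mem_univ, true_and] at ht ⊢
        rw [hcast]
        nlinarith
      rcases ih with h | h
      · left
        rw [Finset.eq_univ_iff_forall] at h ⊢
        intro t
        exact hmono (h t)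
      · by_cases hu : (univ.filter (fun t => πs t ≤ (((k+1):ℕ):ℝ) * ε)) = univ
        · left; exact hu
        · right
          have hSkne : (univ.filter (fun t => πs t ≤ (k:ℝ) * ε)) ≠ univ := by
            intro hc
            apply hu
            rw [Finset.eq_univ_iff_forall] at hc ⊢
            intro t
            exact hmono (hc t)
          obtain ⟨b, hb1, hb2⟩ := hkey k hSkne
          have hbmem : b ∈ univ.filter (fun t => πs t ≤ (((k+1):ℕ):ℝ) * ε) := by
            simp only [mem_filter, mem_univ, true_and]
            rw [hcast]
            exact hb2
          have hbnot : b ∉ univ.filter (fun t => πs t ≤ (k:ℝ) * ε) := by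
            simp only [mem_filter, mem_univ, true_and]
            exact hb1
          have hss : (univ.filter (fun t => πs t ≤ (k:ℝ) * ε)) ⊂
              (univ.filter (fun t => πs t ≤ (((k+1):ℕ):ℝ) * ε)) :=
            Finset.ssubset_iff_of_subset hmono |>.mpr ⟨b, hbmem, hbnot⟩
          have := Finset.card_lt_card hss
          omega
  -- conclude
  refine ⟨πs, hnn, ?_, hΦs⟩
  intro t
  have hN1 : 1 ≤ Fintype.card S := Fintype.card_pos
  have hcast : (((Fintype.card S - 1):ℕ):ℝ) = (Fintype.card S : ℝ) - 1 := by
    push_cast [Nat.cast_sub hN1]; ring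
  have huniv : (univ.filter (fun t => πs t ≤ (((Fintype.card S - 1):ℕ):ℝ) * ε)) = univ := by
    rcases hgrow (Fintype.card S - 1) with h | h
    · exact h
    · apply Finset.eq_univ_of_card
      have hle := Finset.card_le_univ
        (univ.filter (fun t => πs t ≤ (((Fintype.card S - 1):ℕ):ℝ) * ε))
      have : Fintype.card S - 1 + 1 = Fintype.card S := by omega
      rw [this] at h
      omega
  have := Finset.eq_univ_iff_forall.mp huniv t
  simp only [mem_filter, mem_univ, true_and] at this
  rwa [hcast] at this

end Core4

section Core5
variable {S : Type*} [Fintype S] [Nonempty S] [DecidableEq S]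

theorem core_market (f : S → ℝ) (hf : ∀ s, 0 < f s) (hf1 : ∑ s, f s = 1)
    (u : S → S → ℝ) (ε : ℝ) (hε : 0 ≤ ε)
    (hBIC : ∀ s t, u s t ≤ u s s + ε) (hIR : ∀ s, 0 ≤ u s s) :
    ∃ (K : S → S → ℝ) (ρ : S → ℝ) (s0 : S),
      (∀ s t, 0 ≤ K s t) ∧ (∀ s, ∑ t, K s t = 1) ∧ (∀ t, ∑ s, f s * K s t = f t) ∧
      (∀ s sh, ∑ t, K sh t * (u s t - ρ t) ≤ ∑ t, K s t * (u s t - ρ t)) ∧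
      (∀ s, 0 ≤ ∑ t, K s t * (u s t - ρ t)) ∧
      (∀ t, u s0 t ≤ ρ t) ∧
      (-(Fintype.card S : ℝ) * ε ≤ ∑ t, f t * ρ t) ∧
      (∑ s, f s * u s s ≤ ∑ s, ∑ t, (f s * K s t) * u s t) := by
  classical
  obtain ⟨pihat, hmin⟩ := exists_phi_min f hf hf1 u
  obtain ⟨q, hq0, hq1, hq2, hqsupp⟩ := exists_argmax_kernel f hf hf1 u pihat hmin
  set OPT : ℝ := ∑ s, ∑ t, (f s * q s t) * u s t with hOPTdef
  have hid : ∀ π : S → ℝ,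
      PhiF f u π = ∑ s, ∑ t, (f s * q s t) * (lamF u π s + π t) := by
    intro π
    unfold PhiF
    have a1 : ∑ s, f s * lamF u π s = ∑ s, ∑ t, (f s * q s t) * lamF u π s := by
      apply Finset.sum_congr rfl
      intro s _
      rw [← Finset.sum_mul, ← Finset.mul_sum, hq1 s, mul_one]
    have a2 : ∑ t, f t * π t = ∑ s, ∑ t, (f s * q s t) * π t := by
      rw [Finset.sum_comm]
      apply Finset.sum_congr rfl
      intro t _
      rw [← Finset.sum_mul, hq2 t]
    rw [a1, a2, ← Finset.sum_add_distrib]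
    apply Finset.sum_congr rfl
    intro s _
    rw [← Finset.sum_add_distrib]
    apply Finset.sum_congr rfl
    intro t _
    ring
  have hOPT : ∀ π, OPT ≤ PhiF f u π := by
    intro π
    rw [hid π, hOPTdef]
    apply Finset.sum_le_sum
    intro s _
    apply Finset.sum_le_sum
    intro t _
    apply mul_le_mul_of_nonneg_left _ (mul_nonneg (hf s).le (hq0 s t))
    have := lamF_ge u π s t
    linarith
  have hnePhi : PhiF f u pihat = OPT := by
    rw [hid pihat, hOPTdef]
    apply Finset.sum_congr rfl
    intro s _
    apply Finset.sum_congr rfl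
    intro t _
    rcases eq_or_ne (q s t) 0 with h | h
    · rw [h]; ring
    · have := hqsupp s t h
      have heq : lamF u pihat s + pihat t = u s t := by linarith
      rw [heq]
  obtain ⟨πs, hπs0, hπsbd, hΦs⟩ :=
    exists_pistar f hf hf1 u ε hε hBIC OPT hOPT ⟨pihat, hnePhi⟩
  -- complementary slackness at πs
  have hzero : ∑ s, ∑ t, (f s * q s t) * ((lamF u πs s + πs t) - u s t) = 0 := by
    have h2 : ∑ s, ∑ t, (f s * q s t) * ((lamF u πs s + πs t) - u s t)
        = ∑ s, ∑ t, (f s * q s t) * (lamF u πs s + πs t)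
          - ∑ s, ∑ t, (f s * q s t) * u s t := by
      rw [← Finset.sum_sub_distrib]
      apply Finset.sum_congr rfl; intro s _
      rw [← Finset.sum_sub_distrib]
      apply Finset.sum_congr rfl; intro t _
      ring
    rw [h2, ← hid πs, hΦs, hOPTdef]
    ring
  have htermnn : ∀ s t, 0 ≤ (f s * q s t) * ((lamF u πs s + πs t) - u s t) := by
    intro s t
    apply mul_nonneg (mul_nonneg (hf s).le (hq0 s t))
    have := lamF_ge u πs s t
    linarith
  have hcs : ∀ s t, q s t ≠ 0 → u s t - πs t = lamF u πs s := by
    intro s t hq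
    have hinner : ∀ s ∈ univ, (0:ℝ) ≤ ∑ t, (f s * q s t) * ((lamF u πs s + πs t) - u s t) :=
      fun s _ => Finset.sum_nonneg fun t _ => htermnn s t
    have h1 := (Finset.sum_eq_zero_iff_of_nonneg hinner).mp hzero s (mem_univ s)
    have h2 := (Finset.sum_eq_zero_iff_of_nonneg
      (fun t _ => htermnn s t)).mp h1 t (mem_univ t)
    have hpos : 0 < f s * q s t := by
      rcases lt_or_eq_of_le (hq0 s t) with h | h
      · exact mul_pos (hf s) h
      · exact absurd h.symm hq
    have := mul_eq_zero.mp h2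
    rcases this with h | h
    · exact absurd h (ne_of_gt hpos)
    · linarith
  -- argmin of lam
  obtain ⟨s0, _, hs0min⟩ := Finset.exists_min_image univ (lamF u πs) univ_nonempty
  set ρ : S → ℝ := fun t => πs t + lamF u πs s0 with hρ
  have htruth : ∀ s, ∑ t, q s t * (u s t - ρ t) = lamF u πs s - lamF u πs s0 := by
    intro s
    have h1 : ∀ t, q s t * (u s t - ρ t)
        = q s t * (lamF u πs s - lamF u πs s0) := by
      intro t
      rcases eq_or_ne (q s t) 0 with h | h
      · rw [h]; ring
      · have := hcs s t h
        simp only [hρ]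
        have : u s t - (πs t + lamF u πs s0)
            = lamF u πs s - lamF u πs s0 := by linarith
        rw [this]
    rw [Finset.sum_congr rfl fun t _ => h1 t, ← Finset.sum_mul, hq1 s, one_mul]
  refine ⟨q, ρ, s0, hq0, hq1, hq2, ?_, ?_, ?_, ?_, ?_⟩
  · -- BIC
    intro s sh
    rw [htruth s]
    calc ∑ t, q sh t * (u s t - ρ t)
        ≤ ∑ t, q sh t * (lamF u πs s - lamF u πs s0) := by
          apply Finset.sum_le_sum
          intro t _
          apply mul_le_mul_of_nonneg_left _ (hq0 sh t)
          have := lamF_ge u πs s t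
          simp only [hρ]
          linarith
    _ = lamF u πs s - lamF u πs s0 := by rw [← Finset.sum_mul, hq1 sh, one_mul]
  · -- IR
    intro s
    rw [htruth s]
    have := hs0min s (mem_univ s)
    linarith
  · -- payment bound
    intro t
    have := lamF_ge u πs s0 t
    simp only [hρ]
    linarith
  · -- revenue
    have h1 : ∑ t, f t * ρ t = ∑ t, f t * πs t + lamF u πs s0 := by
      simp only [hρ]
      have hh : ∀ t : S, f t * (πs t + lamF u πs s0)
          = f t * πs t + f t * lamF u πs s0 := fun t => by ring
      rw [Finset.sum_congr rfl fun t _ => hh t, Finset.sum_add_distrib,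
        ← Finset.sum_mul, hf1, one_mul]
    have h2 : 0 ≤ ∑ t, f t * πs t :=
      Finset.sum_nonneg fun t _ => mul_nonneg (hf t).le (hπs0 t)
    have h3 : -((Fintype.card S : ℝ) - 1) * ε ≤ lamF u πs s0 := by
      have hge := lamF_ge u πs s0 s0
      have := hIR s0
      have := hπsbd s0
      linarith
    have hN1 : (1:ℝ) ≤ (Fintype.card S : ℝ) := by
      exact_mod_cast Fintype.card_pos
    rw [h1]
    nlinarith
  · -- welfare
    have h1 : ∑ s, f s * u s s ≤ ∑ s, f s * (lamF u πs s + πs s) := by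
      apply Finset.sum_le_sum
      intro s _
      apply mul_le_mul_of_nonneg_left _ (hf s).le
      have := lamF_ge u πs s s
      linarith
    have h2 : ∑ s, f s * (lamF u πs s + πs s) = PhiF f u πs := by
      unfold PhiF
      rw [← Finset.sum_add_distrib]
      apply Finset.sum_congr rfl
      intro s _
      ring
    rw [hΦs, hOPTdef] at h2
    linarith

end Core5

section PiLemmas
variable {n : ℕ} {T : Fin n → Type} [∀ i, Fintype (T i)] [∀ i, Nonempty (T i)]

lemma sum_prod_pi' {ι : Type*} [Fintype ι] [DecidableEq ι] {B : ι → Type*}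
    [∀ i, Fintype (B i)] (g : ∀ j, B j → ℝ) :
    (∑ t : ∀ j, B j, ∏ j, g j (t j)) = ∏ j, ∑ s, g j s := by
  rw [Finset.prod_univ_sum, Fintype.piFinset_univ]

lemma sum_prod_pi (g : ∀ j, T j → ℝ) :
    (∑ t : ∀ j, T j, ∏ j, g j (t j)) = ∏ j, ∑ s, g j s := by
  rw [Finset.prod_univ_sum, Fintype.piFinset_univ]

lemma prod_split' (g : Fin n → ℝ) (i : Fin n) :
    ∏ j, g j = g i * ∏ j : {j : Fin n // j ≠ i}, g j.1 := by
  rw [← Finset.mul_prod_erase univ g (mem_univ i)]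
  congr 1
  exact Finset.prod_subtype (univ.erase i) (fun j => by simp [Finset.mem_erase]) g

lemma sum_split (i : Fin n) (G : (∀ j, T j) → ℝ) :
    ∑ t : ∀ j, T j, G t
      = ∑ a : T i, ∑ r : ∀ j : {j : Fin n // j ≠ i}, T j.1,
          G ((Equiv.piSplitAt i T).symm (a, r)) := by
  rw [← Equiv.sum_comp (Equiv.piSplitAt i T).symm G, Fintype.sum_prod_type]

lemma piSplitAt_symm_same (i : Fin n) (a : T i) (r : ∀ j : {j : Fin n // j ≠ i}, T j.1) :
    (Equiv.piSplitAt i T).symm (a, r) i = a := by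
  simp [Equiv.piSplitAt]

lemma piSplitAt_symm_ne (i : Fin n) (a : T i) (r : ∀ j : {j : Fin n // j ≠ i}, T j.1)
    (j : Fin n) (h : j ≠ i) :
    (Equiv.piSplitAt i T).symm (a, r) j = r ⟨j, h⟩ := by
  simp [Equiv.piSplitAt, h]

lemma update_split (i : Fin n) (a b : T i)
    (r : ∀ j : {j : Fin n // j ≠ i}, T j.1) :
    Function.update ((Equiv.piSplitAt i T).symm (a, r)) i b
      = (Equiv.piSplitAt i T).symm (b, r) := by
  funext j
  by_cases h : j = i
  · subst h
    rw [Function.update_self]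
    exact (piSplitAt_symm_same j b r).symm
  · rw [Function.update_of_ne h, piSplitAt_symm_ne i a r j h, piSplitAt_symm_ne i b r j h]

lemma prod_split (f : ∀ j, T j → ℝ) (i : Fin n) (t : ∀ j, T j) :
    ∏ j, f j (t j) = f i (t i) * ∏ j : {j : Fin n // j ≠ i}, f j.1 (t j.1) := by
  rw [← Finset.mul_prod_erase univ (fun j => f j (t j)) (mem_univ i)]
  congr 1
  exact Finset.prod_subtype (univ.erase i) (fun j => by simp [Finset.mem_erase]) 
    (fun j => f j (t j))

lemma key2 (f : ∀ j, T j → ℝ) (hf1 : ∀ j, ∑ s, f j s = 1) (i : Fin n)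
    (c : T i → ℝ) (F : (∀ j, T j) → ℝ) :
    ∑ t : ∀ j, T j, (c (t i) * ∏ j : {j : Fin n // j ≠ i}, f j.1 (t j.1)) * F t
      = ∑ s : T i, c s * ∑ t : ∀ j, T j, (∏ j, f j (t j)) * F (Function.update t i s) := by
  classical
  have hinner : ∀ s : T i,
      ∑ t : ∀ j, T j, (∏ j, f j (t j)) * F (Function.update t i s)
        = ∑ r : ∀ j : {j : Fin n // j ≠ i}, T j.1,
            (∏ j : {j : Fin n // j ≠ i}, f j.1 (r j))
              * F ((Equiv.piSplitAt i T).symm (s, r)) := by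
    intro s
    rw [sum_split i]
    have hterm : ∀ (a : T i) (r : ∀ j : {j : Fin n // j ≠ i}, T j.1),
        (∏ j, f j ((Equiv.piSplitAt i T).symm (a, r) j))
            * F (Function.update ((Equiv.piSplitAt i T).symm (a, r)) i s)
          = f i a * ((∏ j : {j : Fin n // j ≠ i}, f j.1 (r j))
              * F ((Equiv.piSplitAt i T).symm (s, r))) := by
      intro a r
      rw [update_split, prod_split f i, piSplitAt_symm_same]
      have hc : ∀ j : {j : Fin n // j ≠ i},
          f j.1 ((Equiv.piSplitAt i T).symm (a, r) j.1) = f j.1 (r j) := by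
        intro j
        rw [piSplitAt_symm_ne i a r j.1 j.2]
      rw [Finset.prod_congr rfl fun j _ => hc j]
      ring
    rw [Finset.sum_congr rfl fun a _ => Finset.sum_congr rfl fun r _ => hterm a r]
    have : ∀ a : T i, ∑ r : ∀ j : {j : Fin n // j ≠ i}, T j.1,
        f i a * ((∏ j : {j : Fin n // j ≠ i}, f j.1 (r j))
          * F ((Equiv.piSplitAt i T).symm (s, r)))
        = f i a * ∑ r : ∀ j : {j : Fin n // j ≠ i}, T j.1,
            (∏ j : {j : Fin n // j ≠ i}, f j.1 (r j))
              * F ((Equiv.piSplitAt i T).symm (s, r)) := by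
      intro a
      rw [Finset.mul_sum]
    rw [Finset.sum_congr rfl fun a _ => this a, ← Finset.sum_mul, hf1 i, one_mul]
  have hR : ∑ s : T i, c s * ∑ t : ∀ j, T j, (∏ j, f j (t j)) * F (Function.update t i s)
      = ∑ s : T i, c s * ∑ r : ∀ j : {j : Fin n // j ≠ i}, T j.1,
          (∏ j : {j : Fin n // j ≠ i}, f j.1 (r j))
            * F ((Equiv.piSplitAt i T).symm (s, r)) := by
    apply Finset.sum_congr rfl
    intro s _
    rw [hinner s]
  rw [hR]
  rw [sum_split i (G := fun t => (c (t i) * ∏ j : {j : Fin n // j ≠ i}, f j.1 (t j.1)) * F t)]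
  apply Finset.sum_congr rfl
  intro a _
  rw [Finset.mul_sum]
  apply Finset.sum_congr rfl
  intro r _
  rw [piSplitAt_symm_same]
  have hc : ∀ j : {j : Fin n // j ≠ i},
      f j.1 ((Equiv.piSplitAt i T).symm (a, r) j.1) = f j.1 (r j) := by
    intro j
    rw [piSplitAt_symm_ne i a r j.1 j.2]
  rw [Finset.prod_congr rfl fun j _ => hc j]
  ring

end PiLemmas

section Bridge
variable {n : ℕ} {T : Fin n → Type} [∀ i, Fintype (T i)] [∀ i, Nonempty (T i)]

lemma sum_wr_one (f : ∀ j, T j → ℝ) (hf1 : ∀ j, ∑ s, f j s = 1) (i : Fin n) :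
    ∑ r : ∀ j : {j : Fin n // j ≠ i}, T j.1,
      (∏ j : {j : Fin n // j ≠ i}, f j.1 (r j)) = 1 := by
  rw [sum_prod_pi']
  rw [Finset.prod_congr rfl fun (j : {j : Fin n // j ≠ i}) _ => hf1 j.1]
  exact Finset.prod_const_one

/-- "integrating" a function of the i-th coordinate only -/
lemma sum_coord (f : ∀ j, T j → ℝ) (hf1 : ∀ j, ∑ s, f j s = 1) (i : Fin n)
    (g : T i → ℝ) :
    ∑ t : ∀ j, T j, (∏ j, f j (t j)) * g (t i) = ∑ a : T i, f i a * g a := by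
  rw [sum_split i (G := fun t => (∏ j, f j (t j)) * g (t i))]
  have hterm : ∀ (a : T i) (r : ∀ j : {j : Fin n // j ≠ i}, T j.1),
      (∏ j, f j ((Equiv.piSplitAt i T).symm (a, r) j))
        * g ((Equiv.piSplitAt i T).symm (a, r) i)
      = (f i a * g a) * (∏ j : {j : Fin n // j ≠ i}, f j.1 (r j)) := by
    intro a r
    rw [prod_split f i, piSplitAt_symm_same]
    have hc : ∀ j : {j : Fin n // j ≠ i},
        f j.1 ((Equiv.piSplitAt i T).symm (a, r) j.1) = f j.1 (r j) := fun j => by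
      rw [piSplitAt_symm_ne i a r j.1 j.2]
    rw [Finset.prod_congr rfl fun j _ => hc j]
    ring
  rw [Finset.sum_congr rfl fun a _ => Finset.sum_congr rfl fun r _ => hterm a r]
  apply Finset.sum_congr rfl
  intro a _
  rw [← Finset.mul_sum, sum_wr_one f hf1 i, mul_one]

/-- update-integration -/
lemma sum_update_integr (f : ∀ j, T j → ℝ) (hf1 : ∀ j, ∑ s, f j s = 1) (i : Fin n)
    (F : (∀ j, T j) → ℝ) :
    ∑ t : ∀ j, T j, (∏ j, f j (t j)) * F t
      = ∑ s : T i, f i s * ∑ t : ∀ j, T j, (∏ j, f j (t j)) * F (Function.update t i s) := by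
  rw [← key2 f hf1 i (f i) F]
  apply Finset.sum_congr rfl
  intro t _
  rw [prod_split f i]

/-- interim of a constant-in-others function -/
lemma interim_const (f : ∀ j, T j → ℝ) (hf1 : ∀ j, ∑ s, f j s = 1) (i : Fin n)
    (g : T i → ℝ) (s : T i) :
    ∑ t : ∀ j, T j, (∏ j, f j (t j)) * g ((Function.update t i s) i) = g s := by
  have : ∀ t : ∀ j, T j, g ((Function.update t i s) i) = g s := fun t => by
    rw [Function.update_self]
  rw [Finset.sum_congr rfl fun t _ => by rw [this t]]
  rw [← Finset.sum_mul, sum_prod_pi]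
  rw [Finset.prod_congr rfl fun j _ => hf1 j, Finset.prod_const_one, one_mul]

/-- the central resampling identity -/
lemma resample {O : Type} [Fintype O]
    (f : ∀ j, T j → ℝ) (hf1 : ∀ j, ∑ s, f j s = 1)
    (K : ∀ j, T j → T j → ℝ) (hK2 : ∀ j τ, ∑ a, f j a * K j a τ = f j τ)
    (x : (∀ j, T j) → O → ℝ) (i : Fin n) (a : T i) (o : O) :
    ∑ r : ∀ j : {j : Fin n // j ≠ i}, T j.1,
        (∏ j : {j : Fin n // j ≠ i}, f j.1 (r j))
          * ∑ t' : ∀ j, T j, (∏ j, K j ((Equiv.piSplitAt i T).symm (a, r) j) (t' j)) * x t' o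
      = ∑ τ : T i, K i a τ *
          ∑ t : ∀ j, T j, (∏ j, f j (t j)) * x (Function.update t i τ) o := by
  classical
  have step1 : ∀ (r : ∀ j : {j : Fin n // j ≠ i}, T j.1) (t' : ∀ j, T j),
      (∏ j, K j ((Equiv.piSplitAt i T).symm (a, r) j) (t' j))
        = K i a (t' i) * ∏ j : {j : Fin n // j ≠ i}, K j.1 (r j) (t' j.1) := by
    intro r t'
    rw [prod_split' (fun j => K j ((Equiv.piSplitAt i T).symm (a, r) j) (t' j)) i]
    rw [piSplitAt_symm_same]
    congr 1
    apply Finset.prod_congr rfl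
    intro j _
    rw [piSplitAt_symm_ne i a r j.1 j.2]
  have step2 : ∑ r : ∀ j : {j : Fin n // j ≠ i}, T j.1,
        (∏ j : {j : Fin n // j ≠ i}, f j.1 (r j))
          * ∑ t' : ∀ j, T j, (∏ j, K j ((Equiv.piSplitAt i T).symm (a, r) j) (t' j)) * x t' o
      = ∑ t' : ∀ j, T j, (K i a (t' i)
          * ∏ j : {j : Fin n // j ≠ i}, f j.1 (t' j.1)) * x t' o := by
    have e1 : ∀ r : ∀ j : {j : Fin n // j ≠ i}, T j.1,
        (∏ j : {j : Fin n // j ≠ i}, f j.1 (r j))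
            * ∑ t' : ∀ j, T j, (∏ j, K j ((Equiv.piSplitAt i T).symm (a, r) j) (t' j)) * x t' o
        = ∑ t' : ∀ j, T j, (K i a (t' i) * x t' o)
            * ∏ j : {j : Fin n // j ≠ i}, (f j.1 (r j) * K j.1 (r j) (t' j.1)) := by
      intro r
      rw [Finset.mul_sum]
      apply Finset.sum_congr rfl
      intro t' _
      rw [step1 r t', Finset.prod_mul_distrib]
      ring
    rw [Finset.sum_congr rfl fun r _ => e1 r, Finset.sum_comm]
    apply Finset.sum_congr rfl
    intro t' _
    rw [← Finset.mul_sum]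
    have e2 : ∑ r : ∀ j : {j : Fin n // j ≠ i}, T j.1,
        ∏ j : {j : Fin n // j ≠ i}, (f j.1 (r j) * K j.1 (r j) (t' j.1))
        = ∏ j : {j : Fin n // j ≠ i}, f j.1 (t' j.1) := by
      rw [sum_prod_pi' (fun (j : {j : Fin n // j ≠ i}) (b : T j.1) => f j.1 b * K j.1 b (t' j.1))]
      apply Finset.prod_congr rfl
      intro j _
      exact hK2 j.1 (t' j.1)
    rw [e2]
    ring
  rw [step2, key2 f hf1 i (K i a) (fun t => x t o)]

end Bridge



open Finset

namespace Stmt6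

variable {n : ℕ} {T : Fin n → Type} {O : Type}

/-- The interim utility `U_i(s, s')` of agent `i` with true type `s` reporting `s'`,
where `f j` is the (full-support, normalized) type distribution of agent `j`:
`U_i(s, s') = v_i(s, X_i(s')) − P_i(s')`. -/
noncomputable def interimU [∀ i, Fintype (T i)] [Fintype O]
    (f : ∀ i, T i → ℝ) (v : (i : Fin n) → T i → O → ℝ)
    (x : (∀ i, T i) → O → ℝ) (p : Fin n → (∀ i, T i) → ℝ)
    (i : Fin n) (s s' : T i) : ℝ :=
  (∑ o, (∑ t : ∀ j, T j, (∏ j, f j (t j)) * x (Function.update t i s') o) * v i s o)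
    - ∑ t : ∀ j, T j, (∏ j, f j (t j)) * p i (Function.update t i s')

/-- Expected revenue `R(M) = E_{t∼f}[∑_i p_i(t)]`. -/
noncomputable def Rev [∀ i, Fintype (T i)]
    (f : ∀ i, T i → ℝ) (p : Fin n → (∀ i, T i) → ℝ) : ℝ :=
  ∑ t : ∀ j, T j, (∏ j, f j (t j)) * ∑ i, p i t

/-- Expected social welfare `W(M) = E_{t∼f}[∑_i v_i(t_i, x(t))]`. -/
noncomputable def Wel [∀ i, Fintype (T i)] [Fintype O]
    (f : ∀ i, T i → ℝ) (v : (i : Fin n) → T i → O → ℝ)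
    (x : (∀ i, T i) → O → ℝ) : ℝ :=
  ∑ t : ∀ j, T j, (∏ j, f j (t j)) * ∑ i, ∑ o, x t o * v i (t i) o

end Stmt6

open Stmt6

/-- `ε`-BIC to BIC transformation for `n` agents with independent
full-support type distributions: welfare is preserved, the revenue loss is at most
`(∑ i |T i|)·ε`, and the transformation is (ex ante) allocation-invariant. -/
theorem epsBIC_to_BIC_multi_agent
    {n : ℕ} {T : Fin n → Type} {O : Type}
    [∀ i, Fintype (T i)] [∀ i, Nonempty (T i)] [Fintype O]
    (f : ∀ i, T i → ℝ) (hf : ∀ i t, 0 < f i t) (hf1 : ∀ i, ∑ t, f i t = 1)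
    (v : (i : Fin n) → T i → O → ℝ) (hv : ∀ i t o, 0 ≤ v i t o)
    (ε : ℝ) (hε : 0 ≤ ε)
    (x : (∀ i, T i) → O → ℝ) (p : Fin n → (∀ i, T i) → ℝ)
    (hx0 : ∀ t o, 0 ≤ x t o) (hx1 : ∀ t, ∑ o, x t o = 1)
    (hp : ∀ i t, 0 ≤ p i t)
    -- M is ε-BIC
    (hBIC : ∀ (i : Fin n) (s s' : T i),
      interimU f v x p i s s ≥ interimU f v x p i s s' - ε)
    -- M is interim IR
    (hIR : ∀ (i : Fin n) (s : T i), 0 ≤ interimU f v x p i s s) :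
    ∃ (x' : (∀ i, T i) → O → ℝ) (p' : Fin n → (∀ i, T i) → ℝ),
      (∀ t o, 0 ≤ x' t o) ∧ (∀ t, ∑ o, x' t o = 1) ∧ (∀ i t, 0 ≤ p' i t) ∧
      -- M' is BIC
      (∀ (i : Fin n) (s s' : T i),
        interimU f v x' p' i s s ≥ interimU f v x' p' i s s') ∧
      -- M' is interim IR
      (∀ (i : Fin n) (s : T i), 0 ≤ interimU f v x' p' i s s) ∧
      -- W(M') ≥ W(M)
      Wel f v x' ≥ Wel f v x ∧
      -- R(M') ≥ R(M) − (∑ i |T i|)·ε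
      Rev f p' ≥ Rev f p - (∑ i, (Fintype.card (T i) : ℝ)) * ε ∧
      -- (ex ante) allocation-invariance
      (∀ o, ∑ t : ∀ j, T j, (∏ j, f j (t j)) * x' t o
          = ∑ t : ∀ j, T j, (∏ j, f j (t j)) * x t o) := by
  classical
  set XI : ∀ i : Fin n, T i → O → ℝ :=
    fun i τ o => ∑ t : ∀ j, T j, (∏ j, f j (t j)) * x (Function.update t i τ) o with hXI
  set PP : ∀ i : Fin n, T i → ℝ :=
    fun i τ => ∑ t : ∀ j, T j, (∏ j, f j (t j)) * p i (Function.update t i τ) with hPP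
  set uu : ∀ i : Fin n, T i → T i → ℝ :=
    fun i s τ => (∑ o, XI i τ o * v i s o) - PP i τ with huu
  have huU : ∀ (i : Fin n) (s τ : T i), interimU f v x p i s τ = uu i s τ := by
    intro i s τ; rfl
  have hWnn : ∀ t : ∀ j, T j, 0 ≤ ∏ j, f j (t j) :=
    fun t => Finset.prod_nonneg fun j _ => (hf j (t j)).le
  have hXInn : ∀ i τ o, 0 ≤ XI i τ o := by
    intro i τ o
    apply Finset.sum_nonneg
    intro t _
    exact mul_nonneg (hWnn t) (hx0 _ o)
  have hVnn : ∀ (i : Fin n) (s τ : T i), 0 ≤ ∑ o, XI i τ o * v i s o :=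
    fun i s τ => Finset.sum_nonneg fun o _ => mul_nonneg (hXInn i τ o) (hv i s o)
  have hPPnn : ∀ (i : Fin n) (τ : T i), 0 ≤ PP i τ := by
    intro i τ
    apply Finset.sum_nonneg
    intro t _
    exact mul_nonneg (hWnn t) (hp i _)
  have hcore : ∀ i : Fin n, ∃ K : T i → T i → ℝ, ∃ ρ : T i → ℝ, ∃ s0 : T i,
      (∀ s t, 0 ≤ K s t) ∧ (∀ s, ∑ t, K s t = 1) ∧ (∀ t, ∑ s, f i s * K s t = f i t) ∧
      (∀ s sh, ∑ t, K sh t * (uu i s t - ρ t) ≤ ∑ t, K s t * (uu i s t - ρ t)) ∧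
      (∀ s, 0 ≤ ∑ t, K s t * (uu i s t - ρ t)) ∧
      (∀ t, uu i s0 t ≤ ρ t) ∧
      (-(Fintype.card (T i) : ℝ) * ε ≤ ∑ t, f i t * ρ t) ∧
      (∑ s, f i s * uu i s s ≤ ∑ s, ∑ t, (f i s * K s t) * uu i s t) := by
    intro i
    apply core_market (f i) (hf i) (hf1 i) (uu i) ε hε
    · intro s t
      have := hBIC i s t
      rw [huU i s s, huU i s t] at this
      linarith
    · intro s
      have := hIR i s
      rwa [huU i s s] at this
  choose K ρ s0 hK0 hK1 hK2 hKBIC hKIR hKpp hKrev hKwel using hcore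
  set x' : (∀ j, T j) → O → ℝ :=
    fun t o => ∑ t' : ∀ j, T j, (∏ j, K j (t j) (t' j)) * x t' o with hx'
  set p' : Fin n → (∀ j, T j) → ℝ :=
    fun i t => ∑ τ : T i, K i (t i) τ * (PP i τ + ρ i τ) with hp'
  have hPρnn : ∀ (i : Fin n) (τ : T i), 0 ≤ PP i τ + ρ i τ := by
    intro i τ
    have h1 := hKpp i τ
    have h2 := hVnn i (s0 i) τ
    have h3 : uu i (s0 i) τ = (∑ o, XI i τ o * v i (s0 i) o) - PP i τ := rfl
    rw [h3] at h1
    linarith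
  -- interim payment identity
  have hPint : ∀ (i : Fin n) (sh : T i),
      ∑ t : ∀ j, T j, (∏ j, f j (t j)) * p' i (Function.update t i sh)
        = ∑ τ, K i sh τ * (PP i τ + ρ i τ) :=
    fun i sh => interim_const f hf1 i (fun a => ∑ τ, K i a τ * (PP i τ + ρ i τ)) sh
  -- interim allocation identity
  have hXint : ∀ (i : Fin n) (sh : T i) (o : O),
      ∑ t : ∀ j, T j, (∏ j, f j (t j)) * x' (Function.update t i sh) o
        = ∑ τ, K i sh τ * XI i τ o := by
    intro i sh o
    rw [sum_split i (G := fun t => (∏ j, f j (t j)) * x' (Function.update t i sh) o)]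
    have hterm : ∀ (a : T i) (r : ∀ j : {j : Fin n // j ≠ i}, T j.1),
        (∏ j, f j ((Equiv.piSplitAt i T).symm (a, r) j))
            * x' (Function.update ((Equiv.piSplitAt i T).symm (a, r)) i sh) o
          = f i a * ((∏ j : {j : Fin n // j ≠ i}, f j.1 (r j))
              * x' ((Equiv.piSplitAt i T).symm (sh, r)) o) := by
      intro a r
      rw [update_split, prod_split f i, piSplitAt_symm_same]
      have hc : ∀ j : {j : Fin n // j ≠ i},
          f j.1 ((Equiv.piSplitAt i T).symm (a, r) j.1) = f j.1 (r j) := fun j => by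
        rw [piSplitAt_symm_ne i a r j.1 j.2]
      rw [Finset.prod_congr rfl fun j _ => hc j]
      ring
    rw [Finset.sum_congr rfl fun a _ => Finset.sum_congr rfl fun r _ => hterm a r]
    have hpull : ∀ a : T i, ∑ r : ∀ j : {j : Fin n // j ≠ i}, T j.1,
        f i a * ((∏ j : {j : Fin n // j ≠ i}, f j.1 (r j))
          * x' ((Equiv.piSplitAt i T).symm (sh, r)) o)
        = f i a * ∑ r : ∀ j : {j : Fin n // j ≠ i}, T j.1,
            (∏ j : {j : Fin n // j ≠ i}, f j.1 (r j))
              * x' ((Equiv.piSplitAt i T).symm (sh, r)) o := fun a => by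
      rw [Finset.mul_sum]
    rw [Finset.sum_congr rfl fun a _ => hpull a, ← Finset.sum_mul, hf1 i, one_mul]
    exact resample f hf1 K hK2 x i sh o
  -- interim utility identity for M'
  have huU' : ∀ (i : Fin n) (s sh : T i),
      interimU f v x' p' i s sh = ∑ τ, K i sh τ * (uu i s τ - ρ i τ) := by
    intro i s sh
    unfold interimU
    rw [hPint i sh]
    have h1 : ∑ o, (∑ t : ∀ j, T j, (∏ j, f j (t j)) * x' (Function.update t i sh) o)
        * v i s o = ∑ τ, K i sh τ * ∑ o, XI i τ o * v i s o := by
      rw [Finset.sum_congr rfl fun o _ => by rw [hXint i sh o]]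
      have e : ∀ o : O, (∑ τ : T i, K i sh τ * XI i τ o) * v i s o
          = ∑ τ : T i, K i sh τ * (XI i τ o * v i s o) := by
        intro o; rw [Finset.sum_mul]; apply Finset.sum_congr rfl; intros; ring
      rw [Finset.sum_congr rfl fun o _ => e o, Finset.sum_comm]
      apply Finset.sum_congr rfl
      intro τ _
      rw [Finset.mul_sum]
    rw [h1, ← Finset.sum_sub_distrib]
    apply Finset.sum_congr rfl
    intro τ _
    have h3 : uu i s τ = (∑ o, XI i τ o * v i s o) - PP i τ := rfl
    rw [h3]
    ring
  refine ⟨x', p', ?_, ?_, ?_, ?_, ?_, ?_, ?_, ?_⟩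
  · -- x' nonneg
    intro t o
    apply Finset.sum_nonneg
    intro t' _
    exact mul_nonneg (Finset.prod_nonneg fun j _ => hK0 j (t j) (t' j)) (hx0 t' o)
  · -- x' sums to one
    intro t
    show ∑ o, ∑ t' : ∀ j, T j, (∏ j, K j (t j) (t' j)) * x t' o = 1
    rw [Finset.sum_comm]
    have h1 : ∀ t' : ∀ j, T j, ∑ o, (∏ j, K j (t j) (t' j)) * x t' o
        = ∏ j, K j (t j) (t' j) := by
      intro t'
      rw [← Finset.mul_sum, hx1 t', mul_one]
    rw [Finset.sum_congr rfl fun t' _ => h1 t']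
    rw [sum_prod_pi (g := fun j b => K j (t j) b)]
    rw [Finset.prod_congr rfl fun j _ => hK1 j (t j), Finset.prod_const_one]
  · -- p' nonneg
    intro i t
    apply Finset.sum_nonneg
    intro τ _
    exact mul_nonneg (hK0 i (t i) τ) (hPρnn i τ)
  · -- BIC
    intro i s sh
    rw [ge_iff_le, huU' i s s, huU' i s sh]
    exact hKBIC i s sh
  · -- IR
    intro i s
    rw [huU' i s s]
    exact hKIR i s
  · -- welfare
    have hWelform : ∀ y : (∀ j, T j) → O → ℝ, Wel f v y
        = ∑ i, ∑ t : ∀ j, T j, (∏ j, f j (t j)) * ∑ o, y t o * v i (t i) o := by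
      intro y
      unfold Wel
      rw [Finset.sum_congr rfl fun t (_ : t ∈ univ) => Finset.mul_sum univ _ _]
      exact Finset.sum_comm
    rw [ge_iff_le, hWelform x, hWelform x']
    apply Finset.sum_le_sum
    intro i _
    have horig : ∑ t : ∀ j, T j, (∏ j, f j (t j)) * ∑ o, x t o * v i (t i) o
        = ∑ s, f i s * ∑ o, XI i s o * v i s o := by
      rw [sum_update_integr f hf1 i (F := fun t => ∑ o, x t o * v i (t i) o)]
      apply Finset.sum_congr rfl
      intro s _
      congr 1
      have e1 : ∀ t : ∀ j, T j,
          (∏ j, f j (t j)) * ∑ o, x (Function.update t i s) o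
              * v i ((Function.update t i s) i) o
          = ∑ o, ((∏ j, f j (t j)) * x (Function.update t i s) o) * v i s o := by
        intro t
        rw [Function.update_self, Finset.mul_sum]
        apply Finset.sum_congr rfl; intros; ring
      rw [Finset.sum_congr rfl fun t _ => e1 t, Finset.sum_comm]
      apply Finset.sum_congr rfl
      intro o _
      exact (Finset.sum_mul _ _ _).symm
    have hnew : ∑ t : ∀ j, T j, (∏ j, f j (t j)) * ∑ o, x' t o * v i (t i) o
        = ∑ a, f i a * ∑ τ, K i a τ * ∑ o, XI i τ o * v i a o := by
      rw [sum_split i (G := fun t => (∏ j, f j (t j)) * ∑ o, x' t o * v i (t i) o)]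
      have hterm : ∀ (a : T i) (r : ∀ j : {j : Fin n // j ≠ i}, T j.1),
          (∏ j, f j ((Equiv.piSplitAt i T).symm (a, r) j))
              * ∑ o, x' ((Equiv.piSplitAt i T).symm (a, r)) o
                  * v i ((Equiv.piSplitAt i T).symm (a, r) i) o
            = f i a * ∑ o, v i a o
                * ((∏ j : {j : Fin n // j ≠ i}, f j.1 (r j))
                    * x' ((Equiv.piSplitAt i T).symm (a, r)) o) := by
        intro a r
        rw [prod_split f i, piSplitAt_symm_same]
        have hc : ∀ j : {j : Fin n // j ≠ i},
            f j.1 ((Equiv.piSplitAt i T).symm (a, r) j.1) = f j.1 (r j) := fun j => by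
          rw [piSplitAt_symm_ne i a r j.1 j.2]
        rw [Finset.prod_congr rfl fun j _ => hc j, Finset.mul_sum, Finset.mul_sum]
        apply Finset.sum_congr rfl; intros; ring
      rw [Finset.sum_congr rfl fun a _ => Finset.sum_congr rfl fun r _ => hterm a r]
      apply Finset.sum_congr rfl
      intro a _
      rw [← Finset.mul_sum]
      congr 1
      rw [Finset.sum_comm]
      have e2 : ∀ o : O, ∑ r : ∀ j : {j : Fin n // j ≠ i}, T j.1,
          v i a o * ((∏ j : {j : Fin n // j ≠ i}, f j.1 (r j))
            * x' ((Equiv.piSplitAt i T).symm (a, r)) o)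
          = v i a o * ∑ τ, K i a τ * XI i τ o := by
        intro o
        rw [← Finset.mul_sum]
        congr 1
        exact resample f hf1 K hK2 x i a o
      rw [Finset.sum_congr rfl fun o _ => e2 o]
      have e3 : ∀ o : O, v i a o * ∑ τ, K i a τ * XI i τ o
          = ∑ τ, K i a τ * (XI i τ o * v i a o) := by
        intro o
        rw [Finset.mul_sum]
        apply Finset.sum_congr rfl; intros; ring
      rw [Finset.sum_congr rfl fun o _ => e3 o, Finset.sum_comm]
      apply Finset.sum_congr rfl
      intro τ _
      rw [Finset.mul_sum]
    rw [horig, hnew]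
    have hsplit : ∀ a, ∑ τ, K i a τ * ∑ o, XI i τ o * v i a o
        = ∑ τ, K i a τ * uu i a τ + ∑ τ, K i a τ * PP i τ := by
      intro a
      rw [← Finset.sum_add_distrib]
      apply Finset.sum_congr rfl
      intro τ _
      have h3 : uu i a τ = (∑ o, XI i τ o * v i a o) - PP i τ := rfl
      rw [h3]; ring
    have hdiag : ∀ s, f i s * ∑ o, XI i s o * v i s o
        = f i s * uu i s s + f i s * PP i s := by
      intro s
      have h3 : uu i s s = (∑ o, XI i s o * v i s o) - PP i s := rfl
      rw [h3]; ring
    rw [Finset.sum_congr rfl fun s _ => hdiag s, Finset.sum_add_distrib]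
    have hPPside : ∑ a, f i a * ∑ τ, K i a τ * PP i τ = ∑ s, f i s * PP i s := by
      have e3 : ∀ a, f i a * ∑ τ, K i a τ * PP i τ
          = ∑ τ, (f i a * K i a τ) * PP i τ := by
        intro a
        rw [Finset.mul_sum]
        apply Finset.sum_congr rfl; intros; ring
      rw [Finset.sum_congr rfl fun a _ => e3 a, Finset.sum_comm]
      apply Finset.sum_congr rfl
      intro τ _
      rw [← Finset.sum_mul, hK2 i τ]
    have huuside : ∑ s, f i s * uu i s s
        ≤ ∑ a, f i a * ∑ τ, K i a τ * uu i a τ := by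
      have e4 : ∀ a, f i a * ∑ τ, K i a τ * uu i a τ
          = ∑ τ, (f i a * K i a τ) * uu i a τ := by
        intro a
        rw [Finset.mul_sum]
        apply Finset.sum_congr rfl; intros; ring
      rw [Finset.sum_congr rfl fun a _ => e4 a]
      exact hKwel i
    calc ∑ s, f i s * uu i s s + ∑ s, f i s * PP i s
        ≤ (∑ a, f i a * ∑ τ, K i a τ * uu i a τ) + ∑ a, f i a * ∑ τ, K i a τ * PP i τ := by
          rw [hPPside]
          exact add_le_add_left huuside _
    _ = ∑ a, f i a * ∑ τ, K i a τ * ∑ o, XI i τ o * v i a o := by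
          rw [← Finset.sum_add_distrib]
          apply Finset.sum_congr rfl
          intro a _
          rw [hsplit a, mul_add]
  · -- revenue
    have hRevp : Rev f p = ∑ i, ∑ s, f i s * PP i s := by
      unfold Rev
      rw [Finset.sum_congr rfl fun t (_ : t ∈ univ) => Finset.mul_sum univ _ _,
        Finset.sum_comm]
      apply Finset.sum_congr rfl
      intro i _
      exact sum_update_integr f hf1 i (F := p i)
    have hRevp' : Rev f p' = ∑ i, ∑ τ, f i τ * (PP i τ + ρ i τ) := by
      unfold Rev
      rw [Finset.sum_congr rfl fun t (_ : t ∈ univ) => Finset.mul_sum univ _ _,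
        Finset.sum_comm]
      apply Finset.sum_congr rfl
      intro i _
      calc ∑ t : ∀ j, T j, (∏ j, f j (t j)) * p' i t
          = ∑ a, f i a * ∑ τ, K i a τ * (PP i τ + ρ i τ) :=
            sum_coord f hf1 i (fun a => ∑ τ, K i a τ * (PP i τ + ρ i τ))
      _ = ∑ τ, f i τ * (PP i τ + ρ i τ) := by
            have e3 : ∀ a, f i a * ∑ τ, K i a τ * (PP i τ + ρ i τ)
                = ∑ τ, (f i a * K i a τ) * (PP i τ + ρ i τ) := by
              intro a
              rw [Finset.mul_sum]
              apply Finset.sum_congr rfl; intros; ring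
            rw [Finset.sum_congr rfl fun a _ => e3 a, Finset.sum_comm]
            apply Finset.sum_congr rfl
            intro τ _
            rw [← Finset.sum_mul, hK2 i τ]
    rw [ge_iff_le, hRevp, hRevp']
    have hsplitrev : ∑ i, ∑ τ, f i τ * (PP i τ + ρ i τ)
        = ∑ i, ∑ s, f i s * PP i s + ∑ i, ∑ τ, f i τ * ρ i τ := by
      rw [← Finset.sum_add_distrib]
      apply Finset.sum_congr rfl
      intro i _
      rw [← Finset.sum_add_distrib]
      apply Finset.sum_congr rfl
      intro τ _
      ring
    rw [hsplitrev]
    have h2 : ∑ i, -(Fintype.card (T i) : ℝ) * ε ≤ ∑ i, ∑ τ, f i τ * ρ i τ :=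
      Finset.sum_le_sum fun i _ => hKrev i
    have h3 : ∑ i, -(Fintype.card (T i) : ℝ) * ε
        = -((∑ i, (Fintype.card (T i) : ℝ)) * ε) := by
      rw [Finset.sum_mul, ← Finset.sum_neg_distrib]
      apply Finset.sum_congr rfl; intros; ring
    rw [h3] at h2
    linarith
  · -- invariance
    intro o
    have e1 : ∀ t : ∀ j, T j, (∏ j, f j (t j)) * x' t o
        = ∑ t' : ∀ j, T j, x t' o * ∏ j, (f j (t j) * K j (t j) (t' j)) := by
      intro t
      have hx'val : x' t o = ∑ t' : ∀ j, T j, (∏ j, K j (t j) (t' j)) * x t' o := rfl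
      rw [hx'val, Finset.mul_sum]
      apply Finset.sum_congr rfl
      intro t' _
      rw [Finset.prod_mul_distrib]
      ring
    rw [Finset.sum_congr rfl fun t _ => e1 t, Finset.sum_comm]
    apply Finset.sum_congr rfl
    intro t' _
    have e2 : ∑ t : ∀ j, T j, ∏ j, (f j (t j) * K j (t j) (t' j))
        = ∏ j, f j (t' j) := by
      rw [sum_prod_pi (g := fun j b => f j b * K j b (t' j))]
      apply Finset.prod_congr rfl
      intro j _
      exact hK2 j (t' j)
    rw [← Finset.mul_sum, e2]
    ring
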